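/- L² exponential decay with equal boundary temperatures: Assume s = 0 (so the terms involving R are absent from both equations). There exist constants λ > 0 and C ≥ 1, depending only on α, Pr_x, Pr_z, κ_a, such that every smooth solution (v, Θ, q) of the nondimensional primitive perturbation system on [0, ∞) satisfies, for all t ≥ 0, ‖v(t)‖_{L²}² + ‖Θ(t)‖_{L²}² ≤ C e^{−2λt} (‖v₀‖_{L²}² + ‖Θ₀‖_{L²}²). In fact ‖Θ(t)‖_{L²}² ≤ e^{−λt} ‖Θ₀‖_{L²}² decays with a rate depending only on the Poincaré constant of D and κ_a. -/

import Mathlib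

noncomputable section

open Real MeasureTheory Filter
open scoped ENNReal

/-- Partial derivative in the time variable of a function of (t, x, z). -/
def pT (f : ℝ → ℝ → ℝ → ℝ) : ℝ → ℝ → ℝ → ℝ := fun t x z => deriv (fun s => f s x z) t

/-- Partial derivative in the horizontal variable x of a function of (t, x, z). -/
def pX (f : ℝ → ℝ → ℝ → ℝ) : ℝ → ℝ → ℝ → ℝ := fun t x z => deriv (fun y => f t y z) x

/-- Partial derivative in the vertical variable z of a function of (t, x, z). -/
def pZ (f : ℝ → ℝ → ℝ → ℝ) : ℝ → ℝ → ℝ → ℝ := fun t x z => deriv (fun w => f t x w) z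

/-- Squared L² norm over D = (0, α) × (0, 1) of the time-t slice of f. -/
def L2sqT (α : ℝ) (f : ℝ → ℝ → ℝ → ℝ) (t : ℝ) : ℝ :=
  ∫ x in (0:ℝ)..α, ∫ z in (0:ℝ)..1, (f t x z) ^ 2

/-- Squared H¹ norm over D = (0, α) × (0, 1) of the time-t slice of f. -/
def H1sqT (α : ℝ) (f : ℝ → ℝ → ℝ → ℝ) (t : ℝ) : ℝ :=
  L2sqT α f t + L2sqT α (pX f) t + L2sqT α (pZ f) t

/-- Squared H² norm over D = (0, α) × (0, 1) of the time-t slice of f. -/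
def H2sqT (α : ℝ) (f : ℝ → ℝ → ℝ → ℝ) (t : ℝ) : ℝ :=
  H1sqT α f t + L2sqT α (pX (pX f)) t + L2sqT α (pX (pZ f)) t + L2sqT α (pZ (pZ f)) t

/-- A smooth solution of the nondimensional primitive perturbation system on the time
interval `I`, with buoyancy coefficient `c₁` (= R^|s|) and thermal forcing coefficient
`c₂` (= −sR):

∂ₜv + v ∂ₓv − (∫₀^z ∂ₓv dξ) ∂_z v = Pr_x ∂ₓ²v + Pr_z ∂_z²v − c₁ ∂ₓ(∫₀^z Θ dξ) − ∂ₓq,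
∂ₜΘ + v ∂ₓΘ − (∫₀^z ∂ₓv dξ) ∂_z Θ = ∂ₓ²Θ + κ_a ∂_z²Θ + c₂ ∫₀^z ∂ₓv dξ,

with periodicity in x of period α, boundary conditions ∂_z v = 0 and Θ = 0 at z = 0, 1,
and zero vertical mean of v. -/
structure NondimSolution (I : Set ℝ) (α Prx Prz κa c₁ c₂ : ℝ)
    (v Θ : ℝ → ℝ → ℝ → ℝ) (q : ℝ → ℝ → ℝ) : Prop where
  smooth_v : ContDiff ℝ (⊤ : ℕ∞) (fun p : ℝ × ℝ × ℝ => v p.1 p.2.1 p.2.2)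
  smooth_Θ : ContDiff ℝ (⊤ : ℕ∞) (fun p : ℝ × ℝ × ℝ => Θ p.1 p.2.1 p.2.2)
  smooth_q : ContDiff ℝ (⊤ : ℕ∞) (fun p : ℝ × ℝ => q p.1 p.2)
  periodic_v : ∀ t x z, v t (x + α) z = v t x z
  periodic_Θ : ∀ t x z, Θ t (x + α) z = Θ t x z
  periodic_q : ∀ t x, q t (x + α) = q t x
  momentum : ∀ t ∈ I, ∀ (x : ℝ), ∀ z ∈ Set.Icc (0:ℝ) 1,
    pT v t x z + v t x z * pX v t x z - (∫ ξ in (0:ℝ)..z, pX v t x ξ) * pZ v t x z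
      = Prx * pX (pX v) t x z + Prz * pZ (pZ v) t x z
        - c₁ * pX (fun t x z => ∫ ξ in (0:ℝ)..z, Θ t x ξ) t x z
        - deriv (fun y => q t y) x
  heat : ∀ t ∈ I, ∀ (x : ℝ), ∀ z ∈ Set.Icc (0:ℝ) 1,
    pT Θ t x z + v t x z * pX Θ t x z - (∫ ξ in (0:ℝ)..z, pX v t x ξ) * pZ Θ t x z
      = pX (pX Θ) t x z + κa * pZ (pZ Θ) t x z + c₂ * ∫ ξ in (0:ℝ)..z, pX v t x ξ
  bc_v0 : ∀ t ∈ I, ∀ x : ℝ, pZ v t x 0 = 0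
  bc_v1 : ∀ t ∈ I, ∀ x : ℝ, pZ v t x 1 = 0
  bc_Θ0 : ∀ t ∈ I, ∀ x : ℝ, Θ t x 0 = 0
  bc_Θ1 : ∀ t ∈ I, ∀ x : ℝ, Θ t x 1 = 0
  mean_v : ∀ t ∈ I, ∀ x : ℝ, (∫ z in (0:ℝ)..1, v t x z) = 0

-- ====== auxiliary toolkit ======
namespace PVAux

def unc (f : ℝ → ℝ → ℝ → ℝ) : ℝ × ℝ × ℝ → ℝ := fun p => f p.1 p.2.1 p.2.2

abbrev Smooth3 (f : ℝ → ℝ → ℝ → ℝ) : Prop := ContDiff ℝ (⊤:ℕ∞) (unc f)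

variable {f : ℝ → ℝ → ℝ → ℝ}

lemma hd_slice1 (hf : Smooth3 f) (t x z : ℝ) :
    HasDerivAt (fun s => f s x z) (fderiv ℝ (unc f) (t, x, z) (1, 0, 0)) t := by
  have hline : HasDerivAt (fun s : ℝ => ((s, x, z) : ℝ × ℝ × ℝ)) (1, 0, 0) t :=
    (hasDerivAt_id t).prodMk ((hasDerivAt_const t x).prodMk (hasDerivAt_const t z))
  exact ((hf.differentiable (by simp)).differentiableAt.hasFDerivAt).comp_hasDerivAt t hline

lemma hd_slice2 (hf : Smooth3 f) (t x z : ℝ) :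
    HasDerivAt (fun y => f t y z) (fderiv ℝ (unc f) (t, x, z) (0, 1, 0)) x := by
  have hline : HasDerivAt (fun y : ℝ => ((t, y, z) : ℝ × ℝ × ℝ)) (0, 1, 0) x :=
    (hasDerivAt_const x t).prodMk ((hasDerivAt_id x).prodMk (hasDerivAt_const x z))
  exact ((hf.differentiable (by simp)).differentiableAt.hasFDerivAt).comp_hasDerivAt x hline

lemma hd_slice3 (hf : Smooth3 f) (t x z : ℝ) :
    HasDerivAt (fun w => f t x w) (fderiv ℝ (unc f) (t, x, z) (0, 0, 1)) z := by
  have hline : HasDerivAt (fun w : ℝ => ((t, x, w) : ℝ × ℝ × ℝ)) (0, 0, 1) z :=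
    (hasDerivAt_const z t).prodMk ((hasDerivAt_const z x).prodMk (hasDerivAt_id z))
  exact ((hf.differentiable (by simp)).differentiableAt.hasFDerivAt).comp_hasDerivAt z hline

lemma hd_pT (hf : Smooth3 f) (t x z : ℝ) : HasDerivAt (fun s => f s x z) (pT f t x z) t := by
  have h := hd_slice1 hf t x z
  have : pT f t x z = fderiv ℝ (unc f) (t, x, z) (1, 0, 0) := h.deriv
  rw [this]; exact h

lemma hd_pX (hf : Smooth3 f) (t x z : ℝ) : HasDerivAt (fun y => f t y z) (pX f t x z) x := by
  have h := hd_slice2 hf t x z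
  have : pX f t x z = fderiv ℝ (unc f) (t, x, z) (0, 1, 0) := h.deriv
  rw [this]; exact h

lemma hd_pZ (hf : Smooth3 f) (t x z : ℝ) : HasDerivAt (fun w => f t x w) (pZ f t x z) z := by
  have h := hd_slice3 hf t x z
  have : pZ f t x z = fderiv ℝ (unc f) (t, x, z) (0, 0, 1) := h.deriv
  rw [this]; exact h

lemma smooth_dir (hf : Smooth3 f) (e : ℝ × ℝ × ℝ) :
    ContDiff ℝ (⊤:ℕ∞) (fun p : ℝ × ℝ × ℝ => fderiv ℝ (unc f) p e) :=
  (hf.fderiv_right (by exact_mod_cast le_top)).clm_apply contDiff_const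

lemma smooth_pT (hf : Smooth3 f) : Smooth3 (pT f) := by
  have h := smooth_dir hf (1, 0, 0)
  have he : unc (pT f) = fun p : ℝ × ℝ × ℝ => fderiv ℝ (unc f) p (1, 0, 0) := by
    funext p; exact (hd_slice1 hf p.1 p.2.1 p.2.2).deriv
  unfold Smooth3; rw [he]; exact h

lemma smooth_pX (hf : Smooth3 f) : Smooth3 (pX f) := by
  have h := smooth_dir hf (0, 1, 0)
  have he : unc (pX f) = fun p : ℝ × ℝ × ℝ => fderiv ℝ (unc f) p (0, 1, 0) := by
    funext p; exact (hd_slice2 hf p.1 p.2.1 p.2.2).deriv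
  unfold Smooth3; rw [he]; exact h

lemma smooth_pZ (hf : Smooth3 f) : Smooth3 (pZ f) := by
  have h := smooth_dir hf (0, 0, 1)
  have he : unc (pZ f) = fun p : ℝ × ℝ × ℝ => fderiv ℝ (unc f) p (0, 0, 1) := by
    funext p; exact (hd_slice3 hf p.1 p.2.1 p.2.2).deriv
  unfold Smooth3; rw [he]; exact h

lemma contz (hf : Continuous (unc f)) (t x : ℝ) : Continuous fun z => f t x z :=
  hf.comp (continuous_const.prodMk (continuous_const.prodMk continuous_id))

lemma contx (hf : Continuous (unc f)) (t z : ℝ) : Continuous fun x => f t x z :=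
  hf.comp (continuous_const.prodMk (continuous_id.prodMk continuous_const))

lemma contt (hf : Continuous (unc f)) (x z : ℝ) : Continuous fun t => f t x z :=
  hf.comp (continuous_id.prodMk (continuous_const.prodMk continuous_const))

lemma contxz (hf : Continuous (unc f)) (t : ℝ) : Continuous fun p : ℝ × ℝ => f t p.1 p.2 :=
  hf.comp (continuous_const.prodMk (continuous_fst.prodMk continuous_snd))

lemma contzx (hf : Continuous (unc f)) (t : ℝ) : Continuous fun p : ℝ × ℝ => f t p.2 p.1 :=
  hf.comp (continuous_const.prodMk (continuous_snd.prodMk continuous_fst))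

lemma conttx (hf : Continuous (unc f)) (z : ℝ) : Continuous fun p : ℝ × ℝ => f p.1 p.2 z :=
  hf.comp (continuous_fst.prodMk (continuous_snd.prodMk continuous_const))

lemma cont_reassoc (hf : Continuous (unc f)) :
    Continuous fun q : (ℝ × ℝ) × ℝ => f q.1.1 q.1.2 q.2 :=
  hf.comp ((continuous_fst.comp continuous_fst).prodMk
    ((continuous_snd.comp continuous_fst).prodMk continuous_snd))

lemma cont_param_int {a b : ℝ} (hf : Continuous (unc f)) (t : ℝ) :
    Continuous fun p : ℝ × ℝ => ∫ z in a..b, f t p.1 z :=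
  intervalIntegral.continuous_parametric_intervalIntegral_of_continuous'
    (f := fun p : ℝ × ℝ => fun z => f t p.1 z)
    ((contxz hf t).comp ((continuous_fst.comp continuous_fst).prodMk continuous_snd)) a b

/-- Parametric differentiation of an interval integral, continuous setting. -/
lemma param_hasDerivAt {F F' : ℝ → ℝ → ℝ}
    (hF : Continuous fun p : ℝ × ℝ => F p.1 p.2)
    (hF' : Continuous fun p : ℝ × ℝ => F' p.1 p.2)
    (hd : ∀ y s, HasDerivAt (fun y => F y s) (F' y s) y)
    (a b x : ℝ) :
    HasDerivAt (fun y => ∫ s in a..b, F y s) (∫ s in a..b, F' x s) x := by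
  obtain ⟨C, hC⟩ : ∃ C, ∀ p ∈ (Set.Icc (x-1) (x+1)) ×ˢ (Set.uIcc a b),
      ‖(fun p : ℝ × ℝ => F' p.1 p.2) p‖ ≤ C :=
    (isCompact_Icc.prod isCompact_uIcc).exists_bound_of_continuousOn hF'.continuousOn
  have hmeas : ∀ y : ℝ, AEStronglyMeasurable (F y) (volume.restrict (Set.uIoc a b)) :=
    fun y => ((hF.comp (Continuous.prodMk_right y)).aestronglyMeasurable)
  refine (intervalIntegral.hasDerivAt_integral_of_dominated_loc_of_deriv_le
    (F := F) (F' := F') (bound := fun _ => C) (Metric.ball_mem_nhds x one_pos)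
    (Eventually.of_forall hmeas)
    ((hF.comp (Continuous.prodMk_right x)).intervalIntegrable a b)
    ((hF'.comp (Continuous.prodMk_right x)).aestronglyMeasurable)
    (Eventually.of_forall ?_)
    (intervalIntegrable_const)
    (Eventually.of_forall fun s _ y _ => hd y s)).2
  intro s hs y hy
  have hy' : y ∈ Set.Icc (x-1) (x+1) := by
    have := Metric.mem_ball.mp hy
    rw [Real.dist_eq, abs_lt] at this
    constructor <;> linarith [this.1, this.2]
  exact hC (y, s) ⟨hy', Set.uIoc_subset_uIcc hs⟩

/-- Fubini swap for a globally continuous function on [0,a]×[0,b]. -/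
lemma fubini_swap_cont {G : ℝ → ℝ → ℝ} (hG : Continuous fun p : ℝ × ℝ => G p.1 p.2)
    {a b : ℝ} (ha : 0 ≤ a) (hb : 0 ≤ b) :
    ∫ x in (0:ℝ)..a, ∫ z in (0:ℝ)..b, G x z = ∫ z in (0:ℝ)..b, ∫ x in (0:ℝ)..a, G x z := by
  have hint : Integrable (Function.uncurry G)
      ((volume.restrict (Set.Ioc 0 a)).prod (volume.restrict (Set.Ioc 0 b))) := by
    rw [Measure.prod_restrict]
    have : IntegrableOn (Function.uncurry G) (Set.Icc (0:ℝ) a ×ˢ Set.Icc (0:ℝ) b) volume :=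
      hG.continuousOn.integrableOn_compact (isCompact_Icc.prod isCompact_Icc)
    exact this.mono_set (Set.prod_mono Set.Ioc_subset_Icc_self Set.Ioc_subset_Icc_self)
  have := MeasureTheory.integral_integral_swap (f := G) hint
  simp only [intervalIntegral.integral_of_le ha, intervalIntegral.integral_of_le hb]
  exact this

/-- Cauchy-Schwarz on [0,1]: (∫₀¹ |h|)² ≤ ∫₀¹ h². -/
lemma sq_integral_abs_le {h : ℝ → ℝ} (hh : Continuous h) :
    (∫ z in (0:ℝ)..1, |h z|) ^ 2 ≤ ∫ z in (0:ℝ)..1, (h z) ^ 2 := by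
  set m := ∫ z in (0:ℝ)..1, |h z| with hm
  have h1 : (0:ℝ) ≤ ∫ z in (0:ℝ)..1, (|h z| - m) ^ 2 :=
    intervalIntegral.integral_nonneg zero_le_one (fun z _ => sq_nonneg _)
  have h2 : ∫ z in (0:ℝ)..1, (|h z| - m) ^ 2
      = (∫ z in (0:ℝ)..1, (h z)^2) - 2 * m * m + m ^ 2 := by
    have e : ∀ z : ℝ, (|h z| - m) ^ 2 = (h z)^2 - (2*m) * |h z| + m^2 := by
      intro z; rw [sub_sq, sq_abs]; ring
    simp only [e]
    rw [intervalIntegral.integral_add, intervalIntegral.integral_sub,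
      intervalIntegral.integral_const_mul, intervalIntegral.integral_const]
    · simp [hm]
    · exact (hh.pow 2).intervalIntegrable _ _
    · exact (continuous_const.mul hh.abs).intervalIntegrable _ _
    · exact ((hh.pow 2).sub (continuous_const.mul hh.abs)).intervalIntegrable _ _
    · exact intervalIntegrable_const
  nlinarith [h1, h2]

lemma ibp_cont {u v u' v' : ℝ → ℝ} {a b : ℝ}
    (hu : ∀ x, HasDerivAt u (u' x) x) (hv : ∀ x, HasDerivAt v (v' x) x)
    (hcu' : Continuous u') (hcv' : Continuous v') :
    ∫ x in a..b, u x * v' x = u b * v b - u a * v a - ∫ x in a..b, u' x * v x :=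
  intervalIntegral.integral_mul_deriv_eq_deriv_mul_of_hasDerivAt
    (fun x _ => (hu x).continuousAt.continuousWithinAt)
    (fun x _ => (hv x).continuousAt.continuousWithinAt)
    (fun x _ => hu x) (fun x _ => hv x)
    (hcu'.intervalIntegrable _ _) (hcv'.intervalIntegrable _ _)

lemma gronwall_decay {F DF : ℝ → ℝ} {c : ℝ}
    (hd : ∀ t, HasDerivAt F (DF t) t) (hb : ∀ t ≥ 0, DF t ≤ -c * F t) :
    ∀ t ≥ 0, F t ≤ Real.exp (-c * t) * F 0 := by
  intro t ht
  set g : ℝ → ℝ := fun t => Real.exp (c * t) * F t with hgdef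
  have hg : ∀ s, HasDerivAt g (c * Real.exp (c * s) * F s + Real.exp (c * s) * DF s) s := by
    intro s
    have h1 : HasDerivAt (fun s : ℝ => Real.exp (c * s)) (c * Real.exp (c * s)) s := by
      have := ((hasDerivAt_id s).const_mul c).exp
      simpa [mul_comm] using this
    exact h1.mul (hd s)
  have hanti : AntitoneOn g (Set.Ici 0) := by
    apply antitoneOn_of_deriv_nonpos (convex_Ici 0)
    · exact Continuous.continuousOn (Differentiable.continuous fun s => (hg s).differentiableAt)
    · intro s _
      exact (hg s).differentiableAt.differentiableWithinAt
    · intro s hs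
      rw [interior_Ici] at hs
      rw [(hg s).deriv]
      have hbs := hb s (le_of_lt hs)
      have hexp := Real.exp_pos (c * s)
      nlinarith
  have h0 : g t ≤ g 0 := hanti (Set.self_mem_Ici) ht ht
  have hg0 : g 0 = F 0 := by simp [hgdef]
  have hpos := Real.exp_pos (-(c*t))
  have hmul := mul_le_mul_of_nonneg_left (hg0 ▸ h0) (le_of_lt hpos)
  calc F t = Real.exp (-(c*t)) * (Real.exp (c*t) * F t) := by
              rw [← mul_assoc, ← Real.exp_add]; simp
    _ ≤ Real.exp (-(c*t)) * F 0 := hmul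
    _ = Real.exp (-c * t) * F 0 := by ring_nf

lemma diff_le_int_abs {g g' : ℝ → ℝ} (hg' : Continuous g')
    (hd : ∀ z, HasDerivAt g (g' z) z) {y z : ℝ}
    (hy : y ∈ Set.Icc (0:ℝ) 1) (hz : z ∈ Set.Icc (0:ℝ) 1) :
    |g z - g y| ≤ ∫ s in (0:ℝ)..1, |g' s| := by
  have key : ∀ {p r : ℝ}, p ∈ Set.Icc (0:ℝ) 1 → r ∈ Set.Icc (0:ℝ) 1 → p ≤ r →
      |g r - g p| ≤ ∫ s in (0:ℝ)..1, |g' s| := by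
    intro p r hp hr hpr
    have heq : ∫ s in p..r, g' s = g r - g p :=
      intervalIntegral.integral_eq_sub_of_hasDerivAt (fun s _ => hd s)
        (hg'.intervalIntegrable p r)
    rw [← heq]
    calc |∫ s in p..r, g' s| ≤ ∫ s in p..r, |g' s| :=
          intervalIntegral.abs_integral_le_integral_abs hpr
      _ ≤ ∫ s in (0:ℝ)..1, |g' s| := by
          apply intervalIntegral.integral_mono_interval hp.1 hpr hr.2
          · filter_upwards with s using abs_nonneg _
          · exact hg'.abs.intervalIntegrable 0 1
  rcases le_total y z with h | h
  · exact key hy hz h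
  · rw [abs_sub_comm]; exact key hz hy h

lemma poincare_core {g g' : ℝ → ℝ} (hg' : Continuous g') (hcg : Continuous g)
    (hbd : ∀ z ∈ Set.Icc (0:ℝ) 1, |g z| ≤ ∫ s in (0:ℝ)..1, |g' s|) :
    ∫ z in (0:ℝ)..1, (g z) ^ 2 ≤ ∫ z in (0:ℝ)..1, (g' z) ^ 2 := by
  set M := ∫ s in (0:ℝ)..1, |g' s| with hM
  have h1 : ∫ z in (0:ℝ)..1, (g z) ^ 2 ≤ ∫ z in (0:ℝ)..1, (M : ℝ) ^ 2 := by
    apply intervalIntegral.integral_mono_on zero_le_one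
      ((hcg.pow 2).intervalIntegrable 0 1) (intervalIntegrable_const)
    intro z hz
    have := hbd z hz
    calc (g z)^2 = |g z|^2 := (sq_abs _).symm
      _ ≤ M^2 := by nlinarith [abs_nonneg (g z)]
  have h2 : ∫ z in (0:ℝ)..1, (M:ℝ)^2 = M^2 := by simp
  rw [h2] at h1
  exact h1.trans (sq_integral_abs_le hg')

lemma poincare_dirichlet {g g' : ℝ → ℝ} (hg' : Continuous g')
    (hd : ∀ z, HasDerivAt g (g' z) z) (h0 : g 0 = 0) :
    ∫ z in (0:ℝ)..1, (g z) ^ 2 ≤ ∫ z in (0:ℝ)..1, (g' z) ^ 2 := by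
  apply poincare_core hg' (Differentiable.continuous (fun s => (hd s).differentiableAt))
  intro z hz
  have := diff_le_int_abs hg' hd (Set.left_mem_Icc.mpr zero_le_one) hz
  simpa [h0] using this

lemma poincare_zero_mean {g g' : ℝ → ℝ} (hg' : Continuous g')
    (hd : ∀ z, HasDerivAt g (g' z) z) (h0 : ∫ z in (0:ℝ)..1, g z = 0) :
    ∫ z in (0:ℝ)..1, (g z) ^ 2 ≤ ∫ z in (0:ℝ)..1, (g' z) ^ 2 := by
  have hcg : Continuous g := Differentiable.continuous (fun s => (hd s).differentiableAt)
  apply poincare_core hg' hcg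
  intro z hz
  set M := ∫ s in (0:ℝ)..1, |g' s| with hM
  have hrep : g z = ∫ y in (0:ℝ)..1, (g z - g y) := by
    rw [intervalIntegral.integral_sub intervalIntegrable_const (hcg.intervalIntegrable 0 1), h0]
    simp
  rw [hrep]
  calc |∫ y in (0:ℝ)..1, (g z - g y)| ≤ ∫ y in (0:ℝ)..1, |g z - g y| :=
        intervalIntegral.abs_integral_le_integral_abs zero_le_one
    _ ≤ ∫ y in (0:ℝ)..1, M := by
        apply intervalIntegral.integral_mono_on zero_le_one
          ((continuous_const.sub hcg).abs.intervalIntegrable 0 1) intervalIntegrable_const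
        intro y hy
        exact diff_le_int_abs hg' hd hy hz
    _ = M := by simp

lemma L2sqT_nonneg (α : ℝ) (hα : 0 ≤ α) (f : ℝ → ℝ → ℝ → ℝ) (t : ℝ) : 0 ≤ L2sqT α f t :=
  intervalIntegral.integral_nonneg hα fun x _ =>
    intervalIntegral.integral_nonneg zero_le_one fun z _ => sq_nonneg _

/-- Derivative in time of the squared L² norm. -/
lemma hasDerivAt_L2sqT (hf : Smooth3 f) (α t : ℝ) :
    HasDerivAt (L2sqT α f)
      (∫ x in (0:ℝ)..α, ∫ z in (0:ℝ)..1, 2 * f t x z * pT f t x z) t := by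
  have hg : Smooth3 (fun t x z => f t x z ^ 2) := hf.pow 2
  have hgT : Smooth3 (pT fun t x z => f t x z ^ 2) := smooth_pT hg
  have hder : HasDerivAt (fun τ => ∫ x in (0:ℝ)..α, ∫ z in (0:ℝ)..1, f τ x z ^ 2)
      (∫ x in (0:ℝ)..α, ∫ z in (0:ℝ)..1, pT (fun t x z => f t x z ^ 2) t x z) t := by
    refine param_hasDerivAt
      (F := fun τ x => ∫ z in (0:ℝ)..1, f τ x z ^ 2)
      (F' := fun τ x => ∫ z in (0:ℝ)..1, pT (fun t x z => f t x z ^ 2) τ x z)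
      ?_ ?_ ?_ 0 α t
    · exact intervalIntegral.continuous_parametric_intervalIntegral_of_continuous'
        (f := fun p : ℝ × ℝ => fun z => f p.1 p.2 z ^ 2) (cont_reassoc hg.continuous) 0 1
    · exact intervalIntegral.continuous_parametric_intervalIntegral_of_continuous'
        (f := fun p : ℝ × ℝ => fun z => pT (fun t x z => f t x z ^ 2) p.1 p.2 z)
        (cont_reassoc hgT.continuous) 0 1
    · intro τ x
      refine param_hasDerivAt
        (F := fun τ z => f τ x z ^ 2)
        (F' := fun τ z => pT (fun t x z => f t x z ^ 2) τ x z) ?_ ?_ ?_ 0 1 τ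
      · exact hg.continuous.comp
          (continuous_fst.prodMk (continuous_const.prodMk continuous_snd))
      · exact hgT.continuous.comp
          (continuous_fst.prodMk (continuous_const.prodMk continuous_snd))
      · intro τ' z
        exact hd_pT hg τ' x z
  have he : ∀ τ x z, pT (fun t x z => f t x z ^ 2) τ x z = 2 * f τ x z * pT f τ x z := by
    intro τ x z
    have h : HasDerivAt (fun s => f s x z ^ 2) _ τ := (hd_pT hf τ x z).pow 2
    have := h.deriv
    simpa [pT, pow_one, mul_comm, mul_assoc, mul_left_comm] using this
  have : (∫ x in (0:ℝ)..α, ∫ z in (0:ℝ)..1, pT (fun t x z => f t x z ^ 2) t x z)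
      = ∫ x in (0:ℝ)..α, ∫ z in (0:ℝ)..1, 2 * f t x z * pT f t x z := by
    congr 1 with x
    congr 1 with z
    exact he t x z
  rw [← this]
  exact hder

def Wz (f : ℝ → ℝ → ℝ → ℝ) : ℝ → ℝ → ℝ → ℝ := fun t x z => ∫ ξ in (0:ℝ)..z, f t x ξ

lemma cont_unc_Wz (hf : Continuous (unc f)) : Continuous (unc (Wz f)) := by
  have h := intervalIntegral.continuous_parametric_intervalIntegral_of_continuous
    (μ := volume) (a₀ := (0:ℝ))
    (f := fun p : ℝ × ℝ × ℝ => fun ξ => f p.1 p.2.1 ξ)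
    (hf.comp (((continuous_fst.comp continuous_fst).prodMk
      ((continuous_fst.comp (continuous_snd.comp continuous_fst)).prodMk continuous_snd))))
    (s := fun p : ℝ × ℝ × ℝ => p.2.2) (continuous_snd.comp continuous_snd)
  exact h

lemma hd_Wz_z (hf : Continuous (unc f)) (t x z : ℝ) :
    HasDerivAt (fun z => Wz f t x z) (f t x z) z :=
  ((contz hf t x).integral_hasStrictDerivAt 0 z).hasDerivAt

lemma hd_Wz_x (hf : Smooth3 f) (t x z : ℝ) :
    HasDerivAt (fun y => Wz f t y z) (Wz (pX f) t x z) x :=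
  param_hasDerivAt (F := fun y ξ => f t y ξ) (F' := fun y ξ => pX f t y ξ)
    (contxz hf.continuous t) (contxz (smooth_pX hf).continuous t)
    (fun y s => hd_pX hf t y s) 0 z x

lemma pX_Wz_eq (hf : Smooth3 f) (t x z : ℝ) :
    pX (Wz f) t x z = Wz (pX f) t x z := (hd_Wz_x hf t x z).deriv

lemma periodic_pX {α : ℝ} (hf : Smooth3 f) (hper : ∀ t x z, f t (x + α) z = f t x z)
    (t x z : ℝ) : pX f t (x + α) z = pX f t x z := by
  have h1 : HasDerivAt (fun y => f t (y + α) z) (pX f t (x + α) z * 1) x :=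
    (hd_pX hf t (x + α) z).comp (h := fun y => y + α) x ((hasDerivAt_id' x).add_const α)
  have h2 : (fun y => f t (y + α) z) = fun y => f t y z := funext fun y => hper t y z
  rw [h2, mul_one] at h1
  exact h1.unique (hd_pX hf t x z)

lemma hd_sq {g g' : ℝ → ℝ} {x : ℝ} (h : HasDerivAt g (g' x) x) :
    HasDerivAt (fun y => g y ^ 2) (2 * g x * g' x) x := by
  have h2 := h.pow 2
  norm_num at h2
  exact h2

lemma cont_int_z {G : ℝ → ℝ → ℝ} (hG : Continuous fun p : ℝ × ℝ => G p.1 p.2) :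
    Continuous fun x => ∫ z in (0:ℝ)..1, G x z :=
  intervalIntegral.continuous_parametric_intervalIntegral_of_continuous'
    (f := fun x z => G x z) hG 0 1

lemma cont_int_x {G : ℝ → ℝ → ℝ} {a b : ℝ}
    (hG : Continuous fun p : ℝ × ℝ => G p.1 p.2) :
    Continuous fun z => ∫ x in a..b, G x z :=
  intervalIntegral.continuous_parametric_intervalIntegral_of_continuous'
    (f := fun z x => G x z) (hG.comp (continuous_snd.prodMk continuous_fst)) a b

section SolutionEstimates

variable {α Prx Prz κa : ℝ} {v Θ : ℝ → ℝ → ℝ → ℝ} {q : ℝ → ℝ → ℝ}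

lemma DTheta_bound (hs : NondimSolution (Set.Ici 0) α Prx Prz κa 1 0 v Θ q)
    (hα : 0 < α) (hκa : 0 < κa) :
    ∀ t ≥ (0:ℝ), (∫ x in (0:ℝ)..α, ∫ z in (0:ℝ)..1, 2 * Θ t x z * pT Θ t x z)
      ≤ -(2*κa) * L2sqT α Θ t := by
  intro t ht
  have ht' : t ∈ Set.Ici (0:ℝ) := ht
  have hv : Smooth3 v := hs.smooth_v
  have hΘ : Smooth3 Θ := hs.smooth_Θ
  have cv := hv.continuous
  have cΘ := hΘ.continuous
  have cpXv := (smooth_pX hv).continuous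
  have cpXΘ := (smooth_pX hΘ).continuous
  have cpZΘ := (smooth_pZ hΘ).continuous
  have cpXXΘ := (smooth_pX (smooth_pX hΘ)).continuous
  have cpZZΘ := (smooth_pZ (smooth_pZ hΘ)).continuous
  have cw : Continuous (unc (Wz (pX v))) := cont_unc_Wz cpXv
  -- Step A: pointwise rewrite of the integrand using the heat equation
  have heat' : ∀ (x : ℝ), ∀ z ∈ Set.Icc (0:ℝ) 1,
      2 * Θ t x z * pT Θ t x z
        = 2 * Θ t x z * pX (pX Θ) t x z
          + κa * (2 * Θ t x z * pZ (pZ Θ) t x z)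
          + Wz (pX v) t x z * (2 * Θ t x z * pZ Θ t x z)
          - v t x z * (2 * Θ t x z * pX Θ t x z) := by
    intro x z hz
    have h := hs.heat t ht' x z hz
    simp only [zero_mul, add_zero] at h
    have hT : pT Θ t x z = pX (pX Θ) t x z + κa * pZ (pZ Θ) t x z
        + Wz (pX v) t x z * pZ Θ t x z - v t x z * pX Θ t x z := by
      simp only [Wz]; linarith
    rw [hT]; ring
  -- inner integrals, integration by parts in z
  have hIB : ∀ x : ℝ, (∫ z in (0:ℝ)..1, 2 * Θ t x z * pZ (pZ Θ) t x z)
      = -∫ z in (0:ℝ)..1, (2 * pZ Θ t x z) * pZ Θ t x z := by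
    intro x
    have h := ibp_cont (u := fun z => 2 * Θ t x z) (v := fun z => pZ Θ t x z)
      (u' := fun z => 2 * pZ Θ t x z) (v' := fun z => pZ (pZ Θ) t x z) (a := 0) (b := 1)
      (fun z => (hd_pZ hΘ t x z).const_mul 2) (fun z => hd_pZ (smooth_pZ hΘ) t x z)
      (continuous_const.mul (contz cpZΘ t x)) (contz cpZZΘ t x)
    simpa [hs.bc_Θ0 t ht' x, hs.bc_Θ1 t ht' x] using h
  have hIC : ∀ x : ℝ, (∫ z in (0:ℝ)..1, Wz (pX v) t x z * (2 * Θ t x z * pZ Θ t x z))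
      = -∫ z in (0:ℝ)..1, pX v t x z * (Θ t x z ^ 2) := by
    intro x
    have h := ibp_cont (u := fun z => Wz (pX v) t x z) (v := fun z => Θ t x z ^ 2)
      (u' := fun z => pX v t x z) (v' := fun z => 2 * Θ t x z * pZ Θ t x z) (a := 0) (b := 1)
      (fun z => hd_Wz_z cpXv t x z) (fun z => hd_sq (hd_pZ hΘ t x z))
      (contz cpXv t x) ((continuous_const.mul (contz cΘ t x)).mul (contz cpZΘ t x))
    simpa [hs.bc_Θ0 t ht' x, hs.bc_Θ1 t ht' x] using h
  -- continuity of all 2D integrands (as functions of (x,z))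
  have cA : Continuous fun p : ℝ × ℝ => 2 * Θ t p.1 p.2 * pX (pX Θ) t p.1 p.2 :=
    (continuous_const.mul (contxz cΘ t)).mul (contxz cpXXΘ t)
  have cB : Continuous fun p : ℝ × ℝ => (2 * pZ Θ t p.1 p.2) * pZ Θ t p.1 p.2 :=
    (continuous_const.mul (contxz cpZΘ t)).mul (contxz cpZΘ t)
  have cC : Continuous fun p : ℝ × ℝ => pX v t p.1 p.2 * (Θ t p.1 p.2 ^ 2) :=
    (contxz cpXv t).mul ((contxz cΘ t).pow 2)
  have cD : Continuous fun p : ℝ × ℝ => v t p.1 p.2 * (2 * Θ t p.1 p.2 * pX Θ t p.1 p.2) :=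
    (contxz cv t).mul ((continuous_const.mul (contxz cΘ t)).mul (contxz cpXΘ t))
  -- rewrite the full double integral
  have hsplit : (∫ x in (0:ℝ)..α, ∫ z in (0:ℝ)..1, 2 * Θ t x z * pT Θ t x z)
      = (∫ x in (0:ℝ)..α, ∫ z in (0:ℝ)..1, 2 * Θ t x z * pX (pX Θ) t x z)
        - κa * (∫ x in (0:ℝ)..α, ∫ z in (0:ℝ)..1, (2 * pZ Θ t x z) * pZ Θ t x z)
        - (∫ x in (0:ℝ)..α, ∫ z in (0:ℝ)..1, pX v t x z * (Θ t x z ^ 2))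
        - (∫ x in (0:ℝ)..α, ∫ z in (0:ℝ)..1, v t x z * (2 * Θ t x z * pX Θ t x z)) := by
    have hinner : ∀ x : ℝ, (∫ z in (0:ℝ)..1, 2 * Θ t x z * pT Θ t x z)
        = (∫ z in (0:ℝ)..1, 2 * Θ t x z * pX (pX Θ) t x z)
          - κa * (∫ z in (0:ℝ)..1, (2 * pZ Θ t x z) * pZ Θ t x z)
          - (∫ z in (0:ℝ)..1, pX v t x z * (Θ t x z ^ 2))
          - (∫ z in (0:ℝ)..1, v t x z * (2 * Θ t x z * pX Θ t x z)) := by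
      intro x
      have hcongr : (∫ z in (0:ℝ)..1, 2 * Θ t x z * pT Θ t x z)
          = ∫ z in (0:ℝ)..1,
              (2 * Θ t x z * pX (pX Θ) t x z
               + κa * (2 * Θ t x z * pZ (pZ Θ) t x z)
               + Wz (pX v) t x z * (2 * Θ t x z * pZ Θ t x z)
               - v t x z * (2 * Θ t x z * pX Θ t x z)) := by
        apply intervalIntegral.integral_congr
        intro z hz
        rw [Set.uIcc_of_le zero_le_one] at hz
        exact heat' x z hz
      rw [hcongr]
      have i1 : IntervalIntegrable (fun z => 2 * Θ t x z * pX (pX Θ) t x z) volume 0 1 :=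
        (((continuous_const.mul (contz cΘ t x)).mul (contz cpXXΘ t x))).intervalIntegrable 0 1
      have i2 : IntervalIntegrable (fun z => κa * (2 * Θ t x z * pZ (pZ Θ) t x z)) volume 0 1 :=
        ((continuous_const.mul ((continuous_const.mul (contz cΘ t x)).mul
          (contz cpZZΘ t x)))).intervalIntegrable 0 1
      have i3 : IntervalIntegrable (fun z => Wz (pX v) t x z * (2 * Θ t x z * pZ Θ t x z))
          volume 0 1 :=
        ((contz cw t x).mul ((continuous_const.mul (contz cΘ t x)).mul
          (contz cpZΘ t x))).intervalIntegrable 0 1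
      have i4 : IntervalIntegrable (fun z => v t x z * (2 * Θ t x z * pX Θ t x z)) volume 0 1 :=
        ((contz cv t x).mul ((continuous_const.mul (contz cΘ t x)).mul
          (contz cpXΘ t x))).intervalIntegrable 0 1
      rw [intervalIntegral.integral_sub ((i1.add i2).add i3) i4,
        intervalIntegral.integral_add (i1.add i2) i3,
        intervalIntegral.integral_add i1 i2,
        intervalIntegral.integral_const_mul]
      rw [hIB x, hIC x]
      ring
    -- now integrate over x
    have e1 : (fun x => ∫ z in (0:ℝ)..1, 2 * Θ t x z * pT Θ t x z)
        = fun x => (∫ z in (0:ℝ)..1, 2 * Θ t x z * pX (pX Θ) t x z)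
          - κa * (∫ z in (0:ℝ)..1, (2 * pZ Θ t x z) * pZ Θ t x z)
          - (∫ z in (0:ℝ)..1, pX v t x z * (Θ t x z ^ 2))
          - (∫ z in (0:ℝ)..1, v t x z * (2 * Θ t x z * pX Θ t x z)) := funext hinner
    rw [intervalIntegral.integral_congr (fun x _ => hinner x)]
    have jA : IntervalIntegrable (fun x => ∫ z in (0:ℝ)..1,
        2 * Θ t x z * pX (pX Θ) t x z) volume 0 α := (cont_int_z cA).intervalIntegrable 0 α
    have jB : IntervalIntegrable (fun x => κa * ∫ z in (0:ℝ)..1,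
        (2 * pZ Θ t x z) * pZ Θ t x z) volume 0 α :=
      (continuous_const.mul (cont_int_z cB)).intervalIntegrable 0 α
    have jC : IntervalIntegrable (fun x => ∫ z in (0:ℝ)..1,
        pX v t x z * (Θ t x z ^ 2)) volume 0 α := (cont_int_z cC).intervalIntegrable 0 α
    have jD : IntervalIntegrable (fun x => ∫ z in (0:ℝ)..1,
        v t x z * (2 * Θ t x z * pX Θ t x z)) volume 0 α :=
      (cont_int_z cD).intervalIntegrable 0 α
    rw [intervalIntegral.integral_sub ((jA.sub jB).sub jC) jD,
      intervalIntegral.integral_sub (jA.sub jB) jC,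
      intervalIntegral.integral_sub jA jB,
      intervalIntegral.integral_const_mul]
  -- (1) the x-diffusion term is ≤ 0
  have hibpA : ∀ z : ℝ, (∫ x in (0:ℝ)..α, 2 * Θ t x z * pX (pX Θ) t x z)
      = -∫ x in (0:ℝ)..α, (2 * pX Θ t x z) * pX Θ t x z := by
    intro z
    have h := ibp_cont (u := fun y => 2 * Θ t y z) (v := fun y => pX Θ t y z)
      (u' := fun y => 2 * pX Θ t y z) (v' := fun y => pX (pX Θ) t y z) (a := 0) (b := α)
      (fun y => (hd_pX hΘ t y z).const_mul 2) (fun y => hd_pX (smooth_pX hΘ) t y z)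
      (continuous_const.mul (contx cpXΘ t z)) (contx cpXXΘ t z)
    have hb1 : Θ t α z = Θ t 0 z := by simpa using hs.periodic_Θ t 0 z
    have hb2 : pX Θ t α z = pX Θ t 0 z := by
      simpa using periodic_pX hΘ hs.periodic_Θ t 0 z
    simp only [hb1, hb2] at h
    simpa using h
  have hA : (∫ x in (0:ℝ)..α, ∫ z in (0:ℝ)..1, 2 * Θ t x z * pX (pX Θ) t x z) ≤ 0 := by
    rw [fubini_swap_cont cA hα.le zero_le_one,
      intervalIntegral.integral_congr (fun z _ => hibpA z)]
    have hnn : (0:ℝ) ≤ ∫ z in (0:ℝ)..1, ∫ x in (0:ℝ)..α, (2 * pX Θ t x z) * pX Θ t x z := by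
      apply intervalIntegral.integral_nonneg zero_le_one
      intro z _
      apply intervalIntegral.integral_nonneg hα.le
      intro x _
      nlinarith [sq_nonneg (pX Θ t x z)]
    rw [intervalIntegral.integral_neg]
    linarith
  -- (2) the two transport contributions cancel
  have hibpD : ∀ z : ℝ, (∫ x in (0:ℝ)..α, v t x z * (2 * Θ t x z * pX Θ t x z))
      = -∫ x in (0:ℝ)..α, pX v t x z * (Θ t x z ^ 2) := by
    intro z
    have h := ibp_cont (u := fun y => v t y z) (v := fun y => Θ t y z ^ 2)
      (u' := fun y => pX v t y z) (v' := fun y => 2 * Θ t y z * pX Θ t y z) (a := 0) (b := α)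
      (fun y => hd_pX hv t y z) (fun y => hd_sq (hd_pX hΘ t y z))
      (contx cpXv t z) ((continuous_const.mul (contx cΘ t z)).mul (contx cpXΘ t z))
    have hb1 : Θ t α z = Θ t 0 z := by simpa using hs.periodic_Θ t 0 z
    have hb2 : v t α z = v t 0 z := by simpa using hs.periodic_v t 0 z
    simp only [hb1, hb2] at h
    simpa using h
  have hCD : (∫ x in (0:ℝ)..α, ∫ z in (0:ℝ)..1, v t x z * (2 * Θ t x z * pX Θ t x z))
      = -(∫ x in (0:ℝ)..α, ∫ z in (0:ℝ)..1, pX v t x z * (Θ t x z ^ 2)) := by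
    rw [fubini_swap_cont cD hα.le zero_le_one,
      intervalIntegral.integral_congr (fun z _ => hibpD z),
      intervalIntegral.integral_neg, fubini_swap_cont cC hα.le zero_le_one]
  -- (3) Poincaré in z
  have hp : ∀ x : ℝ, (∫ z in (0:ℝ)..1, Θ t x z ^ 2) ≤ ∫ z in (0:ℝ)..1, (pZ Θ t x z) ^ 2 :=
    fun x => poincare_dirichlet (contz cpZΘ t x) (fun z => hd_pZ hΘ t x z) (hs.bc_Θ0 t ht' x)
  have hmono : L2sqT α Θ t ≤ ∫ x in (0:ℝ)..α, ∫ z in (0:ℝ)..1, (pZ Θ t x z) ^ 2 := by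
    simp only [L2sqT]
    apply intervalIntegral.integral_mono_on hα.le
      ((cont_int_z ((contxz cΘ t).pow 2)).intervalIntegrable 0 α)
      ((cont_int_z ((contxz cpZΘ t).pow 2)).intervalIntegrable 0 α)
    intro x _
    exact hp x
  have hB2 : (∫ x in (0:ℝ)..α, ∫ z in (0:ℝ)..1, (2 * pZ Θ t x z) * pZ Θ t x z)
      = 2 * ∫ x in (0:ℝ)..α, ∫ z in (0:ℝ)..1, (pZ Θ t x z) ^ 2 := by
    have : ∀ x : ℝ, (∫ z in (0:ℝ)..1, (2 * pZ Θ t x z) * pZ Θ t x z)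
        = 2 * ∫ z in (0:ℝ)..1, (pZ Θ t x z) ^ 2 := by
      intro x
      rw [← intervalIntegral.integral_const_mul]
      apply intervalIntegral.integral_congr
      intro z _
      ring
    rw [intervalIntegral.integral_congr (fun x _ => this x),
      intervalIntegral.integral_const_mul]
  rw [hsplit, hCD]
  have hfin : (2*κa) * L2sqT α Θ t
      ≤ κa * ∫ x in (0:ℝ)..α, ∫ z in (0:ℝ)..1, (2 * pZ Θ t x z) * pZ Θ t x z := by
    rw [hB2]
    nlinarith [hmono, hκa.le]
  linarith

lemma Dv_bound (hs : NondimSolution (Set.Ici 0) α Prx Prz κa 1 0 v Θ q)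
    (hα : 0 < α) (hPrx : 0 < Prx) (hPrz : 0 < Prz) :
    ∀ t ≥ (0:ℝ), (∫ x in (0:ℝ)..α, ∫ z in (0:ℝ)..1, 2 * v t x z * pT v t x z)
      ≤ -(2*Prz) * L2sqT α v t + (1/(2*Prx)) * L2sqT α Θ t := by
  intro t ht
  have ht' : t ∈ Set.Ici (0:ℝ) := ht
  have hv : Smooth3 v := hs.smooth_v
  have hΘ : Smooth3 Θ := hs.smooth_Θ
  have cv := hv.continuous
  have cΘ := hΘ.continuous
  have cpXv := (smooth_pX hv).continuous
  have cpZv := (smooth_pZ hv).continuous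
  have cpXXv := (smooth_pX (smooth_pX hv)).continuous
  have cpZZv := (smooth_pZ (smooth_pZ hv)).continuous
  have cpXΘ := (smooth_pX hΘ).continuous
  have cw : Continuous (unc (Wz (pX v))) := cont_unc_Wz cpXv
  have cWΘ : Continuous (unc (Wz Θ)) := cont_unc_Wz cΘ
  have cWpXΘ : Continuous (unc (Wz (pX Θ))) := cont_unc_Wz cpXΘ
  -- the vertical velocity vanishes at z = 1
  have hw1 : ∀ x : ℝ, Wz (pX v) t x 1 = 0 := by
    intro x
    have hdd : HasDerivAt (fun y => ∫ z in (0:ℝ)..1, v t y z)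
        (∫ z in (0:ℝ)..1, pX v t x z) x :=
      param_hasDerivAt (F := fun y z => v t y z) (F' := fun y z => pX v t y z)
        (contxz cv t) (contxz cpXv t) (fun y s => hd_pX hv t y s) 0 1 x
    have hconst : (fun y => ∫ z in (0:ℝ)..1, v t y z) = fun _ => (0:ℝ) :=
      funext fun y => hs.mean_v t ht' y
    rw [hconst] at hdd
    have := hdd.unique (hasDerivAt_const x 0)
    simpa [Wz] using this
  have hw0 : ∀ x : ℝ, Wz (pX v) t x 0 = 0 := by
    intro x; simp [Wz]
  -- Step A : rewrite the integrand with the momentum equation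
  have mom' : ∀ (x : ℝ), ∀ z ∈ Set.Icc (0:ℝ) 1,
      2 * v t x z * pT v t x z
        = Prx * (2 * v t x z * pX (pX v) t x z)
          + Prz * (2 * v t x z * pZ (pZ v) t x z)
          - 2 * v t x z * Wz (pX Θ) t x z
          - (2 * deriv (fun y => q t y) x) * v t x z
          + Wz (pX v) t x z * (2 * v t x z * pZ v t x z)
          - v t x z * (2 * v t x z * pX v t x z) := by
    intro x z hz
    have h := hs.momentum t ht' x z hz
    have hW : pX (fun t x z => ∫ ξ in (0:ℝ)..z, Θ t x ξ) t x z = Wz (pX Θ) t x z :=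
      pX_Wz_eq hΘ t x z
    rw [hW] at h
    have hT : pT v t x z = Prx * pX (pX v) t x z + Prz * pZ (pZ v) t x z
        - Wz (pX Θ) t x z - deriv (fun y => q t y) x
        - v t x z * pX v t x z + Wz (pX v) t x z * pZ v t x z := by
      simp only [Wz, one_mul] at h ⊢
      linarith
    rw [hT]; ring
  -- inner integration by parts in z
  have hI2 : ∀ x : ℝ, (∫ z in (0:ℝ)..1, 2 * v t x z * pZ (pZ v) t x z)
      = -∫ z in (0:ℝ)..1, (2 * pZ v t x z) * pZ v t x z := by
    intro x
    have h := ibp_cont (u := fun z => 2 * v t x z) (v := fun z => pZ v t x z)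
      (u' := fun z => 2 * pZ v t x z) (v' := fun z => pZ (pZ v) t x z) (a := 0) (b := 1)
      (fun z => (hd_pZ hv t x z).const_mul 2) (fun z => hd_pZ (smooth_pZ hv) t x z)
      (continuous_const.mul (contz cpZv t x)) (contz cpZZv t x)
    simpa [hs.bc_v0 t ht' x, hs.bc_v1 t ht' x] using h
  have hI5 : ∀ x : ℝ, (∫ z in (0:ℝ)..1, Wz (pX v) t x z * (2 * v t x z * pZ v t x z))
      = -∫ z in (0:ℝ)..1, pX v t x z * (v t x z ^ 2) := by
    intro x
    have h := ibp_cont (u := fun z => Wz (pX v) t x z) (v := fun z => v t x z ^ 2)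
      (u' := fun z => pX v t x z) (v' := fun z => 2 * v t x z * pZ v t x z) (a := 0) (b := 1)
      (fun z => hd_Wz_z cpXv t x z) (fun z => hd_sq (hd_pZ hv t x z))
      (contz cpXv t x) ((continuous_const.mul (contz cv t x)).mul (contz cpZv t x))
    simpa [hw0 x, hw1 x] using h
  have hI4 : ∀ x : ℝ, (∫ z in (0:ℝ)..1, (2 * deriv (fun y => q t y) x) * v t x z) = 0 := by
    intro x
    rw [intervalIntegral.integral_const_mul, hs.mean_v t ht' x, mul_zero]
  -- continuity of 2D integrands
  have cA : Continuous fun p : ℝ × ℝ => 2 * v t p.1 p.2 * pX (pX v) t p.1 p.2 :=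
    (continuous_const.mul (contxz cv t)).mul (contxz cpXXv t)
  have cB : Continuous fun p : ℝ × ℝ => (2 * pZ v t p.1 p.2) * pZ v t p.1 p.2 :=
    (continuous_const.mul (contxz cpZv t)).mul (contxz cpZv t)
  have cC : Continuous fun p : ℝ × ℝ => pX v t p.1 p.2 * (v t p.1 p.2 ^ 2) :=
    (contxz cpXv t).mul ((contxz cv t).pow 2)
  have cD : Continuous fun p : ℝ × ℝ => v t p.1 p.2 * (2 * v t p.1 p.2 * pX v t p.1 p.2) :=
    (contxz cv t).mul ((continuous_const.mul (contxz cv t)).mul (contxz cpXv t))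
  have cE : Continuous fun p : ℝ × ℝ => 2 * v t p.1 p.2 * Wz (pX Θ) t p.1 p.2 :=
    (continuous_const.mul (contxz cv t)).mul (contxz cWpXΘ t)
  have cB' : Continuous fun p : ℝ × ℝ => (2 * pX v t p.1 p.2) * pX v t p.1 p.2 :=
    (continuous_const.mul (contxz cpXv t)).mul (contxz cpXv t)
  have cF : Continuous fun p : ℝ × ℝ => (2 * pX v t p.1 p.2) * Wz Θ t p.1 p.2 :=
    (continuous_const.mul (contxz cpXv t)).mul (contxz cWΘ t)
  have cWsq : Continuous fun p : ℝ × ℝ => Wz Θ t p.1 p.2 ^ 2 := (contxz cWΘ t).pow 2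
  -- the split of the double integral
  have hsplit : (∫ x in (0:ℝ)..α, ∫ z in (0:ℝ)..1, 2 * v t x z * pT v t x z)
      = Prx * (∫ x in (0:ℝ)..α, ∫ z in (0:ℝ)..1, 2 * v t x z * pX (pX v) t x z)
        - Prz * (∫ x in (0:ℝ)..α, ∫ z in (0:ℝ)..1, (2 * pZ v t x z) * pZ v t x z)
        - (∫ x in (0:ℝ)..α, ∫ z in (0:ℝ)..1, 2 * v t x z * Wz (pX Θ) t x z)
        - (∫ x in (0:ℝ)..α, ∫ z in (0:ℝ)..1, pX v t x z * (v t x z ^ 2))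
        - (∫ x in (0:ℝ)..α, ∫ z in (0:ℝ)..1, v t x z * (2 * v t x z * pX v t x z)) := by
    have hinner : ∀ x : ℝ, (∫ z in (0:ℝ)..1, 2 * v t x z * pT v t x z)
        = Prx * (∫ z in (0:ℝ)..1, 2 * v t x z * pX (pX v) t x z)
          - Prz * (∫ z in (0:ℝ)..1, (2 * pZ v t x z) * pZ v t x z)
          - (∫ z in (0:ℝ)..1, 2 * v t x z * Wz (pX Θ) t x z)
          - (∫ z in (0:ℝ)..1, pX v t x z * (v t x z ^ 2))
          - (∫ z in (0:ℝ)..1, v t x z * (2 * v t x z * pX v t x z)) := by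
      intro x
      have hcongr : (∫ z in (0:ℝ)..1, 2 * v t x z * pT v t x z)
          = ∫ z in (0:ℝ)..1,
              (Prx * (2 * v t x z * pX (pX v) t x z)
               + Prz * (2 * v t x z * pZ (pZ v) t x z)
               - 2 * v t x z * Wz (pX Θ) t x z
               - (2 * deriv (fun y => q t y) x) * v t x z
               + Wz (pX v) t x z * (2 * v t x z * pZ v t x z)
               - v t x z * (2 * v t x z * pX v t x z)) := by
        apply intervalIntegral.integral_congr
        intro z hz
        rw [Set.uIcc_of_le zero_le_one] at hz
        exact mom' x z hz
      rw [hcongr]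
      have i1 : IntervalIntegrable (fun z => Prx * (2 * v t x z * pX (pX v) t x z)) volume 0 1 :=
        (continuous_const.mul ((continuous_const.mul (contz cv t x)).mul
          (contz cpXXv t x))).intervalIntegrable 0 1
      have i2 : IntervalIntegrable (fun z => Prz * (2 * v t x z * pZ (pZ v) t x z)) volume 0 1 :=
        (continuous_const.mul ((continuous_const.mul (contz cv t x)).mul
          (contz cpZZv t x))).intervalIntegrable 0 1
      have i3 : IntervalIntegrable (fun z => 2 * v t x z * Wz (pX Θ) t x z) volume 0 1 :=
        ((continuous_const.mul (contz cv t x)).mul (contz cWpXΘ t x)).intervalIntegrable 0 1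
      have i4 : IntervalIntegrable (fun z => (2 * deriv (fun y => q t y) x) * v t x z)
          volume 0 1 := (continuous_const.mul (contz cv t x)).intervalIntegrable 0 1
      have i5 : IntervalIntegrable (fun z => Wz (pX v) t x z * (2 * v t x z * pZ v t x z))
          volume 0 1 :=
        ((contz cw t x).mul ((continuous_const.mul (contz cv t x)).mul
          (contz cpZv t x))).intervalIntegrable 0 1
      have i6 : IntervalIntegrable (fun z => v t x z * (2 * v t x z * pX v t x z)) volume 0 1 :=
        ((contz cv t x).mul ((continuous_const.mul (contz cv t x)).mul
          (contz cpXv t x))).intervalIntegrable 0 1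
      rw [intervalIntegral.integral_sub ((((i1.add i2).sub i3).sub i4).add i5) i6,
        intervalIntegral.integral_add (((i1.add i2).sub i3).sub i4) i5,
        intervalIntegral.integral_sub ((i1.add i2).sub i3) i4,
        intervalIntegral.integral_sub (i1.add i2) i3,
        intervalIntegral.integral_add i1 i2,
        intervalIntegral.integral_const_mul, intervalIntegral.integral_const_mul]
      rw [hI2 x, hI5 x, hI4 x]
      ring
    rw [intervalIntegral.integral_congr (fun x _ => hinner x)]
    have jA : IntervalIntegrable (fun x => Prx * ∫ z in (0:ℝ)..1,
        2 * v t x z * pX (pX v) t x z) volume 0 α :=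
      (continuous_const.mul (cont_int_z cA)).intervalIntegrable 0 α
    have jB : IntervalIntegrable (fun x => Prz * ∫ z in (0:ℝ)..1,
        (2 * pZ v t x z) * pZ v t x z) volume 0 α :=
      (continuous_const.mul (cont_int_z cB)).intervalIntegrable 0 α
    have jE : IntervalIntegrable (fun x => ∫ z in (0:ℝ)..1,
        2 * v t x z * Wz (pX Θ) t x z) volume 0 α := (cont_int_z cE).intervalIntegrable 0 α
    have jC : IntervalIntegrable (fun x => ∫ z in (0:ℝ)..1,
        pX v t x z * (v t x z ^ 2)) volume 0 α := (cont_int_z cC).intervalIntegrable 0 α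
    have jD : IntervalIntegrable (fun x => ∫ z in (0:ℝ)..1,
        v t x z * (2 * v t x z * pX v t x z)) volume 0 α :=
      (cont_int_z cD).intervalIntegrable 0 α
    rw [intervalIntegral.integral_sub ((((jA.sub jB).sub jE).sub jC)) jD,
      intervalIntegral.integral_sub ((jA.sub jB).sub jE) jC,
      intervalIntegral.integral_sub (jA.sub jB) jE,
      intervalIntegral.integral_sub jA jB,
      intervalIntegral.integral_const_mul, intervalIntegral.integral_const_mul]
  -- (a) x-viscous term via periodic integration by parts
  set SX := ∫ z in (0:ℝ)..1, ∫ x in (0:ℝ)..α, (2 * pX v t x z) * pX v t x z with hSXdef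
  have hibpA : ∀ z : ℝ, (∫ x in (0:ℝ)..α, 2 * v t x z * pX (pX v) t x z)
      = -∫ x in (0:ℝ)..α, (2 * pX v t x z) * pX v t x z := by
    intro z
    have h := ibp_cont (u := fun y => 2 * v t y z) (v := fun y => pX v t y z)
      (u' := fun y => 2 * pX v t y z) (v' := fun y => pX (pX v) t y z) (a := 0) (b := α)
      (fun y => (hd_pX hv t y z).const_mul 2) (fun y => hd_pX (smooth_pX hv) t y z)
      (continuous_const.mul (contx cpXv t z)) (contx cpXXv t z)
    have hb1 : v t α z = v t 0 z := by simpa using hs.periodic_v t 0 z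
    have hb2 : pX v t α z = pX v t 0 z := by
      simpa using periodic_pX hv hs.periodic_v t 0 z
    simp only [hb1, hb2] at h
    simpa using h
  have eA : (∫ x in (0:ℝ)..α, ∫ z in (0:ℝ)..1, 2 * v t x z * pX (pX v) t x z) = -SX := by
    rw [fubini_swap_cont cA hα.le zero_le_one,
      intervalIntegral.integral_congr (fun z _ => hibpA z), intervalIntegral.integral_neg]
  -- (b) transport cancellation
  have hibpD : ∀ z : ℝ, (∫ x in (0:ℝ)..α, v t x z * (2 * v t x z * pX v t x z))
      = -∫ x in (0:ℝ)..α, pX v t x z * (v t x z ^ 2) := by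
    intro z
    have h := ibp_cont (u := fun y => v t y z) (v := fun y => v t y z ^ 2)
      (u' := fun y => pX v t y z) (v' := fun y => 2 * v t y z * pX v t y z) (a := 0) (b := α)
      (fun y => hd_pX hv t y z) (fun y => hd_sq (hd_pX hv t y z))
      (contx cpXv t z) ((continuous_const.mul (contx cv t z)).mul (contx cpXv t z))
    have hb1 : v t α z = v t 0 z := by simpa using hs.periodic_v t 0 z
    simp only [hb1] at h
    simpa using h
  have eD : (∫ x in (0:ℝ)..α, ∫ z in (0:ℝ)..1, v t x z * (2 * v t x z * pX v t x z))
      = -(∫ x in (0:ℝ)..α, ∫ z in (0:ℝ)..1, pX v t x z * (v t x z ^ 2)) := by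
    rw [fubini_swap_cont cD hα.le zero_le_one,
      intervalIntegral.integral_congr (fun z _ => hibpD z),
      intervalIntegral.integral_neg, fubini_swap_cont cC hα.le zero_le_one]
  -- (c) buoyancy term
  set P := ∫ z in (0:ℝ)..1, ∫ x in (0:ℝ)..α, (2 * pX v t x z) * Wz Θ t x z with hPdef
  have hibpE : ∀ z : ℝ, (∫ x in (0:ℝ)..α, 2 * v t x z * Wz (pX Θ) t x z)
      = -∫ x in (0:ℝ)..α, (2 * pX v t x z) * Wz Θ t x z := by
    intro z
    have h := ibp_cont (u := fun y => 2 * v t y z) (v := fun y => Wz Θ t y z)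
      (u' := fun y => 2 * pX v t y z) (v' := fun y => Wz (pX Θ) t y z) (a := 0) (b := α)
      (fun y => (hd_pX hv t y z).const_mul 2) (fun y => hd_Wz_x hΘ t y z)
      (continuous_const.mul (contx cpXv t z)) (contx cWpXΘ t z)
    have hb1 : v t α z = v t 0 z := by simpa using hs.periodic_v t 0 z
    have hbW : Wz Θ t α z = Wz Θ t 0 z := by
      have hfe : (fun ξ => Θ t α ξ) = fun ξ => Θ t 0 ξ :=
        funext fun ξ => by simpa using hs.periodic_Θ t 0 ξ
      simp only [Wz, hfe]
    simp only [hb1, hbW] at h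
    simpa using h
  have eE : (∫ x in (0:ℝ)..α, ∫ z in (0:ℝ)..1, 2 * v t x z * Wz (pX Θ) t x z) = -P := by
    rw [fubini_swap_cont cE hα.le zero_le_one,
      intervalIntegral.integral_congr (fun z _ => hibpE z), intervalIntegral.integral_neg]
  -- (d) Young inequality for the buoyancy term
  set Q := ∫ z in (0:ℝ)..1, ∫ x in (0:ℝ)..α, Wz Θ t x z ^ 2 with hQdef
  have hyoung : ∀ z x : ℝ, (2 * pX v t x z) * Wz Θ t x z
      ≤ Prx * ((2 * pX v t x z) * pX v t x z) + (1/(2*Prx)) * (Wz Θ t x z ^ 2) := by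
    intro z x
    have hinv : (1/(2*Prx)) * (2*Prx) = 1 := by field_simp
    nlinarith [sq_nonneg (2 * Prx * pX v t x z - Wz Θ t x z), hPrx,
      sq_nonneg (Wz Θ t x z), sq_nonneg (pX v t x z)]
  have hz1 : ∀ z : ℝ, (∫ x in (0:ℝ)..α, (2 * pX v t x z) * Wz Θ t x z)
      ≤ Prx * (∫ x in (0:ℝ)..α, (2 * pX v t x z) * pX v t x z)
        + (1/(2*Prx)) * (∫ x in (0:ℝ)..α, Wz Θ t x z ^ 2) := by
    intro z
    have i1 : IntervalIntegrable (fun x => Prx * ((2 * pX v t x z) * pX v t x z))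
        volume 0 α :=
      (continuous_const.mul ((continuous_const.mul (contx cpXv t z)).mul
        (contx cpXv t z))).intervalIntegrable 0 α
    have i2 : IntervalIntegrable (fun x => (1/(2*Prx)) * (Wz Θ t x z ^ 2)) volume 0 α :=
      (continuous_const.mul ((contx cWΘ t z).pow 2)).intervalIntegrable 0 α
    calc (∫ x in (0:ℝ)..α, (2 * pX v t x z) * Wz Θ t x z)
        ≤ ∫ x in (0:ℝ)..α, (Prx * ((2 * pX v t x z) * pX v t x z)
            + (1/(2*Prx)) * (Wz Θ t x z ^ 2)) := by
          apply intervalIntegral.integral_mono_on hα.le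
            (((continuous_const.mul (contx cpXv t z)).mul
              (contx cWΘ t z)).intervalIntegrable 0 α) (i1.add i2)
          intro x _
          exact hyoung z x
      _ = Prx * (∫ x in (0:ℝ)..α, (2 * pX v t x z) * pX v t x z)
            + (1/(2*Prx)) * (∫ x in (0:ℝ)..α, Wz Θ t x z ^ 2) := by
          rw [intervalIntegral.integral_add i1 i2, intervalIntegral.integral_const_mul,
            intervalIntegral.integral_const_mul]
  have hPle : P ≤ Prx * SX + (1/(2*Prx)) * Q := by
    have j1 : IntervalIntegrable (fun z => Prx * ∫ x in (0:ℝ)..α,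
        (2 * pX v t x z) * pX v t x z) volume 0 1 :=
      (continuous_const.mul (cont_int_x (a := 0) (b := α) cB')).intervalIntegrable 0 1
    have j2 : IntervalIntegrable (fun z => (1/(2*Prx)) * ∫ x in (0:ℝ)..α,
        Wz Θ t x z ^ 2) volume 0 1 :=
      (continuous_const.mul (cont_int_x (a := 0) (b := α) cWsq)).intervalIntegrable 0 1
    calc P ≤ ∫ z in (0:ℝ)..1, (Prx * (∫ x in (0:ℝ)..α, (2 * pX v t x z) * pX v t x z)
            + (1/(2*Prx)) * (∫ x in (0:ℝ)..α, Wz Θ t x z ^ 2)) := by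
          apply intervalIntegral.integral_mono_on zero_le_one
            ((cont_int_x (a := 0) (b := α) cF).intervalIntegrable 0 1) (j1.add j2)
          intro z _
          exact hz1 z
      _ = Prx * SX + (1/(2*Prx)) * Q := by
          rw [intervalIntegral.integral_add j1 j2, intervalIntegral.integral_const_mul,
            intervalIntegral.integral_const_mul]
  -- (e) bound on Q
  have hQ : Q ≤ L2sqT α Θ t := by
    have hswap : Q = ∫ x in (0:ℝ)..α, ∫ z in (0:ℝ)..1, Wz Θ t x z ^ 2 :=
      (fubini_swap_cont cWsq hα.le zero_le_one).symm
    rw [hswap]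
    simp only [L2sqT]
    apply intervalIntegral.integral_mono_on hα.le
      ((cont_int_z cWsq).intervalIntegrable 0 α)
      ((cont_int_z ((contxz cΘ t).pow 2)).intervalIntegrable 0 α)
    intro x _
    have hzbd : ∀ z ∈ Set.Icc (0:ℝ) 1, Wz Θ t x z ^ 2 ≤ ∫ s in (0:ℝ)..1, Θ t x s ^ 2 := by
      intro z hz
      have h1 : |Wz Θ t x z| ≤ ∫ s in (0:ℝ)..1, |Θ t x s| := by
        simp only [Wz]
        calc |∫ ξ in (0:ℝ)..z, Θ t x ξ| ≤ ∫ ξ in (0:ℝ)..z, |Θ t x ξ| :=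
              intervalIntegral.abs_integral_le_integral_abs hz.1
          _ ≤ ∫ s in (0:ℝ)..1, |Θ t x s| := by
              apply intervalIntegral.integral_mono_interval le_rfl hz.1 hz.2
              · filter_upwards with s using abs_nonneg _
              · exact (contz cΘ t x).abs.intervalIntegrable 0 1
      calc Wz Θ t x z ^ 2 = |Wz Θ t x z| ^ 2 := (sq_abs _).symm
        _ ≤ (∫ s in (0:ℝ)..1, |Θ t x s|) ^ 2 := by
            nlinarith [abs_nonneg (Wz Θ t x z), h1]
        _ ≤ ∫ s in (0:ℝ)..1, Θ t x s ^ 2 := sq_integral_abs_le (contz cΘ t x)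
    calc (∫ z in (0:ℝ)..1, Wz Θ t x z ^ 2)
        ≤ ∫ z in (0:ℝ)..1, (∫ s in (0:ℝ)..1, Θ t x s ^ 2) := by
          apply intervalIntegral.integral_mono_on zero_le_one
            (((contz cWΘ t x).pow 2).intervalIntegrable 0 1) intervalIntegrable_const
          exact hzbd
      _ = ∫ z in (0:ℝ)..1, Θ t x z ^ 2 := by simp
  -- (f) z-viscous term and Poincaré
  set SZ := ∫ x in (0:ℝ)..α, ∫ z in (0:ℝ)..1, (pZ v t x z) ^ 2 with hSZdef
  have hTB : (∫ x in (0:ℝ)..α, ∫ z in (0:ℝ)..1, (2 * pZ v t x z) * pZ v t x z) = 2 * SZ := by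
    have hx : ∀ x : ℝ, (∫ z in (0:ℝ)..1, (2 * pZ v t x z) * pZ v t x z)
        = 2 * ∫ z in (0:ℝ)..1, (pZ v t x z) ^ 2 := by
      intro x
      rw [← intervalIntegral.integral_const_mul]
      apply intervalIntegral.integral_congr
      intro z _
      ring
    rw [intervalIntegral.integral_congr (fun x _ => hx x),
      intervalIntegral.integral_const_mul]
  have hPoin : L2sqT α v t ≤ SZ := by
    simp only [L2sqT, hSZdef]
    apply intervalIntegral.integral_mono_on hα.le
      ((cont_int_z ((contxz cv t).pow 2)).intervalIntegrable 0 α)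
      ((cont_int_z ((contxz cpZv t).pow 2)).intervalIntegrable 0 α)
    intro x _
    exact poincare_zero_mean (contz cpZv t x) (fun z => hd_pZ hv t x z) (hs.mean_v t ht' x)
  -- final assembly
  rw [hsplit, eA, eE, eD, hTB]
  have m1 : (2*Prz) * L2sqT α v t ≤ (2*Prz) * SZ :=
    mul_le_mul_of_nonneg_left hPoin (by positivity)
  have m2 : (1/(2*Prx)) * Q ≤ (1/(2*Prx)) * L2sqT α Θ t :=
    mul_le_mul_of_nonneg_left hQ (by positivity)
  nlinarith [hPle, m1, m2]


end SolutionEstimates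

end PVAux


/-- L² exponential decay with equal boundary temperatures (s = 0). -/
theorem L2_decay_equal_boundary_temperatures
    (α Prx Prz κa R : ℝ)
    (hα : 0 < α) (hPrx : 0 < Prx) (hPrz : 0 < Prz) (hκa : 0 < κa) (hR : 0 ≤ R) :
    ∃ lam > (0:ℝ), ∃ C ≥ (1:ℝ), ∀ (v Θ : ℝ → ℝ → ℝ → ℝ) (q : ℝ → ℝ → ℝ),
      NondimSolution (Set.Ici 0) α Prx Prz κa 1 0 v Θ q →
      (∀ t ≥ (0:ℝ),
        L2sqT α v t + L2sqT α Θ t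
          ≤ C * Real.exp (-(2 * lam) * t) * (L2sqT α v 0 + L2sqT α Θ 0))
      ∧ (∀ t ≥ (0:ℝ), L2sqT α Θ t ≤ Real.exp (-lam * t) * L2sqT α Θ 0) := by
  classical
  have hM : (0:ℝ) < 1/(Prx*κa) := by positivity
  set M : ℝ := 1/(Prx*κa) with hMdef
  set lam : ℝ := min Prz ((3/4)*κa) with hlamdef
  have hlam_pos : 0 < lam := lt_min hPrz (by positivity)
  have hlam1 : lam ≤ Prz := min_le_left _ _
  have hlam2 : lam ≤ (3/4)*κa := min_le_right _ _
  have hlam3 : lam ≤ 2*κa := by linarith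
  set C : ℝ := (1 + 1/M) * (1 + M) with hCdef
  have hC1 : (1:ℝ) ≤ C := by
    have h1 : 0 < 1/M := by positivity
    nlinarith [hM, h1]
  refine ⟨lam, hlam_pos, C, hC1, ?_⟩
  intro v Θ q hs
  have hv : PVAux.Smooth3 v := hs.smooth_v
  have hΘ : PVAux.Smooth3 Θ := hs.smooth_Θ
  have hEΘ0 : 0 ≤ L2sqT α Θ 0 := PVAux.L2sqT_nonneg α hα.le Θ 0
  have hEv0 : 0 ≤ L2sqT α v 0 := PVAux.L2sqT_nonneg α hα.le v 0
  -- second part : decay of Θ alone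
  have part2 : ∀ t ≥ (0:ℝ), L2sqT α Θ t ≤ Real.exp (-lam * t) * L2sqT α Θ 0 := by
    have hgr := PVAux.gronwall_decay (F := L2sqT α Θ)
      (DF := fun τ => ∫ x in (0:ℝ)..α, ∫ z in (0:ℝ)..1, 2 * Θ τ x z * pT Θ τ x z)
      (c := 2*κa)
      (fun τ => PVAux.hasDerivAt_L2sqT hΘ α τ)
      (fun τ hτ => by
        have := PVAux.DTheta_bound hs hα hκa τ hτ
        linarith)
    intro t ht
    have h1 := hgr t ht
    have h2 : Real.exp (-(2*κa) * t) ≤ Real.exp (-lam * t) := by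
      apply Real.exp_le_exp.mpr
      nlinarith [ht, hlam3]
    calc L2sqT α Θ t ≤ Real.exp (-(2*κa) * t) * L2sqT α Θ 0 := h1
      _ ≤ Real.exp (-lam * t) * L2sqT α Θ 0 :=
          mul_le_mul_of_nonneg_right h2 hEΘ0
  refine ⟨?_, part2⟩
  -- first part : decay of the combined energy
  have hkey : (1/(2*Prx)) + M * (-(2*κa)) ≤ -(2*lam) * M := by
    rw [hMdef]
    have hPrx0 : Prx ≠ 0 := ne_of_gt hPrx
    have hκa0 : κa ≠ 0 := ne_of_gt hκa
    have eL : 1/(2*Prx) + 1/(Prx*κa) * -(2*κa) = (-(3/2))*(1/Prx) := by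
      field_simp
      ring
    have eR : -(2*lam)*(1/(Prx*κa)) = (-(2*lam)/κa)*(1/Prx) := by
      field_simp
    rw [eL, eR]
    apply mul_le_mul_of_nonneg_right _ (by positivity)
    rw [le_div_iff₀ hκa]
    linarith [hlam2]
  have hdF : ∀ τ, HasDerivAt (fun τ => L2sqT α v τ + M * L2sqT α Θ τ)
      ((∫ x in (0:ℝ)..α, ∫ z in (0:ℝ)..1, 2 * v τ x z * pT v τ x z)
        + M * (∫ x in (0:ℝ)..α, ∫ z in (0:ℝ)..1, 2 * Θ τ x z * pT Θ τ x z)) τ :=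
    fun τ => (PVAux.hasDerivAt_L2sqT hv α τ).add
      ((PVAux.hasDerivAt_L2sqT hΘ α τ).const_mul M)
  have hbF : ∀ τ ≥ (0:ℝ),
      (∫ x in (0:ℝ)..α, ∫ z in (0:ℝ)..1, 2 * v τ x z * pT v τ x z)
        + M * (∫ x in (0:ℝ)..α, ∫ z in (0:ℝ)..1, 2 * Θ τ x z * pT Θ τ x z)
      ≤ -(2*lam) * (L2sqT α v τ + M * L2sqT α Θ τ) := by
    intro τ hτ
    have h1 := PVAux.Dv_bound hs hα hPrx hPrz τ hτ
    have h2 := PVAux.DTheta_bound hs hα hκa τ hτ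
    have hEv : 0 ≤ L2sqT α v τ := PVAux.L2sqT_nonneg α hα.le v τ
    have hEΘ : 0 ≤ L2sqT α Θ τ := PVAux.L2sqT_nonneg α hα.le Θ τ
    have hB : M * (∫ x in (0:ℝ)..α, ∫ z in (0:ℝ)..1, 2 * Θ τ x z * pT Θ τ x z)
        ≤ M * (-(2*κa) * L2sqT α Θ τ) := mul_le_mul_of_nonneg_left h2 hM.le
    have hk1 : -(2*Prz) * L2sqT α v τ ≤ -(2*lam) * L2sqT α v τ := by
      nlinarith [hEv, hlam1]
    have hD := mul_le_mul_of_nonneg_right hkey hEΘ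
    linarith [h1, hB, hk1, hD]
  have hgrF := PVAux.gronwall_decay
    (F := fun τ => L2sqT α v τ + M * L2sqT α Θ τ)
    (DF := fun τ => (∫ x in (0:ℝ)..α, ∫ z in (0:ℝ)..1, 2 * v τ x z * pT v τ x z)
      + M * (∫ x in (0:ℝ)..α, ∫ z in (0:ℝ)..1, 2 * Θ τ x z * pT Θ τ x z))
    (c := 2*lam) hdF hbF
  intro t ht
  have hEvt : 0 ≤ L2sqT α v t := PVAux.L2sqT_nonneg α hα.le v t
  have hEΘt : 0 ≤ L2sqT α Θ t := PVAux.L2sqT_nonneg α hα.le Θ t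
  have hFt := hgrF t ht
  have hinvM : (1/M) * M = 1 := by field_simp
  have s1 : L2sqT α v t + L2sqT α Θ t
      ≤ (1 + 1/M) * (L2sqT α v t + M * L2sqT α Θ t) := by
    have h3 : (1/M) * (M * L2sqT α Θ t) = L2sqT α Θ t := by
      field_simp
    have n1 : 0 ≤ M * L2sqT α Θ t := mul_nonneg hM.le hEΘt
    have n2 : 0 ≤ (1/M) * L2sqT α v t := by positivity
    linarith [h3, n1, n2]
  have s3 : L2sqT α v 0 + M * L2sqT α Θ 0 ≤ (1 + M) * (L2sqT α v 0 + L2sqT α Θ 0) := by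
    nlinarith [hEΘ0, mul_nonneg hM.le hEv0]
  have hexp : 0 ≤ Real.exp (-(2*lam)*t) := (Real.exp_pos _).le
  have hc1 : (0:ℝ) ≤ 1 + 1/M := by positivity
  calc L2sqT α v t + L2sqT α Θ t
      ≤ (1 + 1/M) * (L2sqT α v t + M * L2sqT α Θ t) := s1
    _ ≤ (1 + 1/M) * (Real.exp (-(2*lam)*t) * (L2sqT α v 0 + M * L2sqT α Θ 0)) :=
        mul_le_mul_of_nonneg_left hFt hc1
    _ ≤ (1 + 1/M) * (Real.exp (-(2*lam)*t) * ((1 + M) * (L2sqT α v 0 + L2sqT α Θ 0))) := by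
        apply mul_le_mul_of_nonneg_left _ hc1
        exact mul_le_mul_of_nonneg_left s3 hexp
    _ = C * Real.exp (-(2*lam)*t) * (L2sqT α v 0 + L2sqT α Θ 0) := by
        rw [hCdef]; ring
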